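/- Let f_n, f : ℝ → ℝ be continuous functions such that f_n → f uniformly on compact subsets of ℝ, and suppose that for every a > 0, sup_{n ≥ 1, x ∈ ℝ} ( max(f_n(x), f(x)) − a x² ) < ∞, and that inf_n f_n(0) > −∞. Then for every a > 0, lim_{n→∞} sup_{x ∈ ℝ} ( f_n(x) − a x² ) = sup_{x ∈ ℝ} ( f(x) − a x² ). -/

import Mathlib

open Filter

theorem penalized_sup_converges
    (f : ℕ → ℝ → ℝ) (g : ℝ → ℝ)
    (hfc : ∀ n, Continuous (f n)) (hgc : Continuous g)
    (hunif : ∀ K : Set ℝ, IsCompact K → TendstoUniformlyOn f g atTop K)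
    (hdom : ∀ a : ℝ, 0 < a → ∃ C : ℝ, ∀ n : ℕ, ∀ x : ℝ,
      max (f n x) (g x) - a * x^2 ≤ C)
    (hinf : ∃ m : ℝ, ∀ n : ℕ, m ≤ f n 0) :
    ∀ a : ℝ, 0 < a →
      Tendsto (fun n => ⨆ x : ℝ, (f n x - a * x^2)) atTop
        (nhds (⨆ x : ℝ, (g x - a * x^2))) := by
  obtain ⟨m, hm⟩ := hinf
  intro a ha
  obtain ⟨C, hC⟩ := hdom (a/2) (half_pos ha)
  obtain ⟨C0, hC0⟩ := hdom a ha
  have hg0 : m ≤ g 0 := by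
    have h := (hunif {0} isCompact_singleton).tendsto_at (Set.mem_singleton (0:ℝ))
    exact ge_of_tendsto h (Eventually.of_forall hm)
  set R := Real.sqrt (max 0 ((C - m) * (2/a))) with hRdef
  have hR0 : 0 ≤ R := Real.sqrt_nonneg _
  have hRsq : (C - m) * (2/a) ≤ R^2 := by
    rw [hRdef, Real.sq_sqrt (le_max_left _ _)]
    exact le_max_right _ _
  set K := Set.Icc (-R) R with hKdef
  have hK : IsCompact K := isCompact_Icc
  have h0K : (0:ℝ) ∈ K := ⟨by linarith, hR0⟩
  have htail : ∀ x : ℝ, x ∉ K → C - a/2 * x^2 ≤ m := by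
    intro x hx
    have hx2 : R^2 ≤ x^2 := by
      have hx' : ¬(-R ≤ x ∧ x ≤ R) := by simpa [hKdef, Set.mem_Icc] using hx
      rcases not_and_or.mp hx' with h | h
      · nlinarith [not_le.mp h]
      · nlinarith [not_le.mp h]
    have h1 : (C - m) * (2/a) ≤ x^2 := hRsq.trans hx2
    have h2 := mul_le_mul_of_nonneg_left h1 (half_pos ha).le
    have h3 : a/2 * ((C - m) * (2/a)) = C - m := by field_simp
    linarith
  set φ : ℕ → ℝ → ℝ := fun n x => f n x - a * x^2 with hφ
  set ψ : ℝ → ℝ := fun x => g x - a * x^2 with hψ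
  have hφcont : ∀ n, Continuous (φ n) := fun n => (hfc n).sub (continuous_const.mul (continuous_pow 2))
  have hψcont : Continuous ψ := hgc.sub (continuous_const.mul (continuous_pow 2))
  have bddφ : ∀ n, BddAbove (Set.range (φ n)) := by
    intro n
    refine ⟨C0, ?_⟩
    rintro y ⟨x, rfl⟩
    have := hC0 n x
    have := le_max_left (f n x) (g x)
    simp only [hφ]
    linarith
  have bddψ : BddAbove (Set.range ψ) := by
    refine ⟨C0, ?_⟩
    rintro y ⟨x, rfl⟩
    have := hC0 0 x
    have := le_max_right (f 0 x) (g x)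
    simp only [hψ]
    linarith
  have bddKφ : ∀ n, BddAbove (φ n '' K) := fun n =>
    (hK.bddAbove_image (hφcont n).continuousOn)
  have bddKψ : BddAbove (ψ '' K) := hK.bddAbove_image hψcont.continuousOn
  have neKφ : ∀ n, (φ n '' K).Nonempty := fun n => ⟨φ n 0, Set.mem_image_of_mem _ h0K⟩
  have neKψ : (ψ '' K).Nonempty := ⟨ψ 0, Set.mem_image_of_mem _ h0K⟩
  have key : ∀ n, (⨆ x : ℝ, φ n x) = sSup (φ n '' K) := by
    intro n
    apply le_antisymm
    · apply ciSup_le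
      intro x
      by_cases hx : x ∈ K
      · exact le_csSup (bddKφ n) (Set.mem_image_of_mem _ hx)
      · have h1 : φ n x ≤ C - a/2 * x^2 := by
          have := hC n x
          have := le_max_left (f n x) (g x)
          simp only [hφ]
          linarith
        have h2 := htail x hx
        have h3 : m ≤ φ n 0 := by
          have := hm n
          simp only [hφ]
          norm_num
          linarith
        have h4 : φ n 0 ≤ sSup (φ n '' K) := le_csSup (bddKφ n) (Set.mem_image_of_mem _ h0K)
        exact le_trans h1 (le_trans h2 (le_trans h3 h4))
    · exact csSup_le (neKφ n) (by rintro y ⟨x, -, rfl⟩; exact le_ciSup (bddφ n) x)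
  have keyg : (⨆ x : ℝ, ψ x) = sSup (ψ '' K) := by
    apply le_antisymm
    · apply ciSup_le
      intro x
      by_cases hx : x ∈ K
      · exact le_csSup bddKψ (Set.mem_image_of_mem _ hx)
      · have h1 : ψ x ≤ C - a/2 * x^2 := by
          have := hC 0 x
          have := le_max_right (f 0 x) (g x)
          simp only [hψ]
          linarith
        have h2 := htail x hx
        have h3 : m ≤ ψ 0 := by
          simp only [hψ]
          norm_num
          linarith
        have h4 : ψ 0 ≤ sSup (ψ '' K) := le_csSup bddKψ (Set.mem_image_of_mem _ h0K)
        exact le_trans h1 (le_trans h2 (le_trans h3 h4))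
    · exact csSup_le neKψ (by rintro y ⟨x, -, rfl⟩; exact le_ciSup bddψ x)
  have hfun : (fun n => ⨆ x : ℝ, (f n x - a * x^2)) = fun n => sSup (φ n '' K) :=
    funext key
  rw [show (⨆ x : ℝ, (g x - a * x^2)) = sSup (ψ '' K) from keyg, hfun]
  rw [Metric.tendsto_atTop]
  intro ε hε
  have h := (Metric.tendstoUniformlyOn_iff.mp (hunif K hK)) (ε/2) (half_pos hε)
  obtain ⟨N, hN⟩ := eventually_atTop.mp h
  refine ⟨N, fun n hn => ?_⟩
  have h1 : sSup (φ n '' K) ≤ sSup (ψ '' K) + ε/2 := by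
    apply csSup_le (neKφ n)
    rintro y ⟨x, hxK, rfl⟩
    have hd := hN n hn x hxK
    rw [Real.dist_eq, abs_lt] at hd
    have h5 : ψ x ≤ sSup (ψ '' K) := le_csSup bddKψ (Set.mem_image_of_mem _ hxK)
    simp only [hφ, hψ] at *
    linarith
  have h2 : sSup (ψ '' K) ≤ sSup (φ n '' K) + ε/2 := by
    apply csSup_le neKψ
    rintro y ⟨x, hxK, rfl⟩
    have hd := hN n hn x hxK
    rw [Real.dist_eq, abs_lt] at hd
    have h5 : φ n x ≤ sSup (φ n '' K) := le_csSup (bddKφ n) (Set.mem_image_of_mem _ hxK)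
    simp only [hφ, hψ] at *
    linarith
  rw [Real.dist_eq, abs_lt]
  constructor <;> linarith
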